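/- arXiv:2308.16363 — 6 statements merged into one kernel-verified Lean document; each statement's English description precedes it below -/
import Mathlib

section
/- In a CD neighborhood graph, for any two vertices s, t distinct from v: if some shortest directed path from s to t passes through v as an interior vertex, then there is exactly one shortest directed path from s to t, i.e. σ(s,t) = 1. -/
open Finset

variable {V : Type*}

/-- `l` is a directed path from `s` to `t` in the directed graph with adjacency
relation `adj`: consecutive vertices are joined by edges, it starts at `s`,
ends at `t`, and has no repeated vertices. -/
def IsDirPath (adj : V → V → Prop) (s t : V) (l : List V) : Prop :=
  l.Chain' adj ∧ l.head? = some s ∧ l.getLast? = some t ∧ l.Nodup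

/-- `l` is a shortest directed path from `s` to `t`. -/
def IsShortestDirPath (adj : V → V → Prop) (s t : V) (l : List V) : Prop :=
  IsDirPath adj s t l ∧ ∀ l', IsDirPath adj s t l' → l.length ≤ l'.length

/-- `x` occurs as an interior vertex of the list `l` (i.e. `x` is a member of `l`
which is neither the first nor the last entry). -/
def ListInterior (l : List V) (x : V) : Prop := x ∈ l.tail.dropLast

/-- `σ(s,t)`: the number of shortest directed paths from `s` to `t`. -/
noncomputable def numShortest (adj : V → V → Prop) (s t : V) : ℕ :=
  {l : List V | IsShortestDirPath adj s t l}.ncard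

/-- `σ(s,t∣x)`: the number of shortest directed paths from `s` to `t` that pass
through `x` as an interior vertex. -/
noncomputable def numShortestThrough (adj : V → V → Prop) (s t x : V) : ℕ :=
  {l : List V | IsShortestDirPath adj s t l ∧ ListInterior l x}.ncard

/-- A CD Index neighborhood graph: a directed graph whose vertex set is the
disjoint union `{v} ∪ I ∪ J ∪ K ∪ T` of the focal vertex `v` and four pairwise
disjoint finite sets, with the edge structure of the CD Index neighborhood. -/
structure CDGraph (V : Type*) where
  /-- the adjacency relation: `adj u w` means there is a directed edge `u → w` -/
  adj : V → V → Prop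
  /-- the focal vertex -/
  v : V
  /-- the set of `I`-type vertices -/
  I : Finset V
  /-- the set of `J`-type vertices -/
  J : Finset V
  /-- the set of `K`-type vertices -/
  K : Finset V
  /-- the set of vertices cited by `v` -/
  T : Finset V
  v_not_I : v ∉ I
  v_not_J : v ∉ J
  v_not_K : v ∉ K
  v_not_T : v ∉ T
  disj_IJ : Disjoint I J
  disj_IK : Disjoint I K
  disj_IT : Disjoint I T
  disj_JK : Disjoint J K
  disj_JT : Disjoint J T
  disj_KT : Disjoint K T
  /-- every vertex is `v` or belongs to one of `I`, `J`, `K`, `T` -/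
  cover : ∀ x : V, x = v ∨ x ∈ I ∨ x ∈ J ∨ x ∈ K ∨ x ∈ T
  /-- `v` has an out-edge to each element of `T` and no other out-edges -/
  v_out : ∀ w, adj v w ↔ w ∈ T
  /-- each `i ∈ I` has exactly one out-edge, namely to `v` -/
  I_out : ∀ i ∈ I, ∀ w, adj i w ↔ w = v
  /-- each `j ∈ J` has an out-edge to `v` -/
  J_cites_v : ∀ j ∈ J, adj j v
  /-- each `j ∈ J` has at least one out-edge into `T` -/
  J_cites_T : ∀ j ∈ J, ∃ t ∈ T, adj j t
  /-- every out-edge of `j ∈ J` goes to `{v} ∪ T` -/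
  J_out : ∀ j ∈ J, ∀ w, adj j w → w = v ∨ w ∈ T
  /-- each `k ∈ K` has at least one out-edge -/
  K_cites : ∀ k ∈ K, ∃ w, adj k w
  /-- every out-edge of `k ∈ K` goes into `T` -/
  K_out : ∀ k ∈ K, ∀ w, adj k w → w ∈ T
  /-- vertices in `T` have no out-edges -/
  T_out : ∀ t ∈ T, ∀ w, ¬ adj t w

/-- The out-degree of a vertex `u`: the number of out-neighbors of `u`. -/
noncomputable def CDGraph.degout (G : CDGraph V) (u : V) : ℕ :=
  {w | G.adj u w}.ncard

/-- The in-degree of the focal vertex `v`, namely `n_I + n_J`. -/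
def CDGraph.degin (G : CDGraph V) : ℕ := G.I.card + G.J.card

/-- The raw betweenness of the focal vertex `v`:
`B(v) = Σ_{s ≠ v} Σ_{t ≠ v} σ(s,t∣v)/σ(s,t)`, where terms with `σ(s,t) = 0`
count as `0` (division by zero in `ℝ` yields `0`). -/
noncomputable def CDGraph.B [Fintype V] [DecidableEq V] (G : CDGraph V) : ℝ :=
  ∑ s ∈ univ.erase G.v, ∑ t ∈ univ.erase G.v,
    (numShortestThrough G.adj s t G.v : ℝ) / (numShortest G.adj s t : ℝ)

/-- In a CD neighborhood graph, for any two vertices `s, t` distinct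
from `v`: if some shortest directed path from `s` to `t` passes through `v` as an
interior vertex, then there is exactly one shortest directed path from `s` to `t`,
i.e. `σ(s,t) = 1`. -/
theorem cd_sigma_eq_one [Fintype V] (G : CDGraph V) (s t : V)
    (hs : s ≠ G.v) (ht : t ≠ G.v)
    (h : ∃ l, IsShortestDirPath G.adj s t l ∧ ListInterior l G.v) :
    numShortest G.adj s t = 1 := by
  classical
  obtain ⟨l, hl, hint⟩ := h
  have htgt : ∀ a b, G.adj a b → b = G.v ∨ b ∈ G.T := by
    intro a b hab
    rcases G.cover a with rfl | ha | ha | ha | ha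
    · exact Or.inr ((G.v_out b).mp hab)
    · exact Or.inl ((G.I_out a ha b).mp hab)
    · exact G.J_out a ha b hab
    · exact Or.inr (G.K_out a ha b hab)
    · exact absurd hab (G.T_out a ha b)
  have hlen3 : ∀ l', IsDirPath G.adj s t l' → l'.length ≤ 3 := by
    rintro l' ⟨hch, _, _, hnd⟩
    by_contra hgt
    push_neg at hgt
    obtain ⟨a, b, c, d, rest, rfl⟩ : ∃ a b c d rest, l' = a::b::c::d::rest := by
      match l', hgt with
      | a::b::c::d::rest, _ => exact ⟨a,b,c,d,rest,rfl⟩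
    simp only [List.Chain', List.isChain_cons_cons] at hch
    obtain ⟨hab, hbc, hcd, -⟩ := hch
    have hc : c = G.v := by
      rcases htgt b c hbc with h1 | h1
      · exact h1
      · exact absurd hcd (G.T_out c h1 d)
    have hb : b ≠ G.v := by
      intro hb
      simp [hb, hc] at hnd
    rcases htgt a b hab with h1 | h1
    · exact hb h1
    · exact (G.T_out b h1 c) hbc
  -- l has exactly 3 vertices
  have hlge : 3 ≤ l.length := by
    have hne : l.tail.dropLast ≠ [] := by
      intro hnil; rw [ListInterior, hnil] at hint; exact absurd hint List.not_mem_nil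
    have h0 := List.length_pos_iff.mpr hne
    rw [List.length_dropLast, List.length_tail] at h0
    omega
  have hleq : l.length = 3 := le_antisymm (hlen3 l hl.1) hlge
  obtain ⟨x, y, z, rfl⟩ : ∃ x y z, l = [x, y, z] := by
    match l, hleq with
    | [x, y, z], _ => exact ⟨x, y, z, rfl⟩
  obtain ⟨⟨hch, hhd, hlst, hnd⟩, hmin⟩ := hl
  have hx : x = s := by simpa using hhd
  have hz : z = t := by simpa [List.getLast?] using hlst
  have hy : y = G.v := by
    have := hint
    simp only [ListInterior, List.tail_cons, List.dropLast, List.mem_singleton] at this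
    exact this.symm
  have hl3 : ([x, y, z] : List V) = [s, G.v, t] := by rw [hx, hy, hz]
  rw [hl3] at hch hhd hlst hnd hmin
  -- uniqueness
  have huniq : ∀ l', IsShortestDirPath G.adj s t l' → l' = [s, G.v, t] := by
    rintro l' ⟨hl', hmin'⟩
    have h1 : l'.length ≤ 3 := hmin' [s, G.v, t] ⟨hch, hhd, hlst, hnd⟩
    have h2 : 3 ≤ l'.length := by simpa [hl3] using hmin l' hl'
    have hleq' : l'.length = 3 := le_antisymm h1 h2
    obtain ⟨a, b, c, rfl⟩ : ∃ a b c, l' = [a, b, c] := by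
      match l', hleq' with
      | [a, b, c], _ => exact ⟨a, b, c, rfl⟩
    obtain ⟨hch', hhd', hlst', hnd'⟩ := hl'
    have ha : a = s := by simpa using hhd'
    have hc : c = t := by simpa [List.getLast?] using hlst'
    simp only [List.Chain', List.isChain_cons_cons] at hch'
    obtain ⟨hab, hbc, -⟩ := hch'
    have hb : b = G.v := by
      rcases htgt a b hab with h1 | h1
      · exact h1
      · exact absurd hbc (G.T_out b h1 c)
    rw [ha, hb, hc]
  have hset : {l : List V | IsShortestDirPath G.adj s t l} = {[s, G.v, t]} := by
    ext l'
    simp only [Set.mem_setOf_eq, Set.mem_singleton_iff]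
    constructor
    · exact huniq l'
    · rintro rfl; exact ⟨⟨hch, hhd, hlst, hnd⟩, hmin⟩
  rw [numShortest, hset, Set.ncard_singleton]
end

section
/- In a CD neighborhood graph, for any two vertices s, t distinct from v, the number of shortest directed paths from s to t passing through v as an interior vertex satisfies σ(s,t|v) ≤ 1. -/
open Finset

variable {V : Type*}

lemma CDGraph.adj_to_v (G : CDGraph V) {a : V} (h : G.adj a G.v) :
    a ∈ G.I ∨ a ∈ G.J := by
  rcases G.cover a with rfl | hI | hJ | hK | hT
  · exact absurd ((G.v_out _).1 h) G.v_not_T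
  · exact Or.inl hI
  · exact Or.inr hJ
  · exact absurd (G.K_out _ hK _ h) G.v_not_T
  · exact absurd h (G.T_out _ hT _)

lemma CDGraph.no_edge_to_IJ (G : CDGraph V) {c a : V} (ha : a ∈ G.I ∨ a ∈ G.J)
    (h : G.adj c a) : False := by
  have hav : a ≠ G.v := by
    rintro rfl
    rcases ha with h' | h'
    · exact G.v_not_I h'
    · exact G.v_not_J h'
  have haT : a ∉ G.T := by
    rcases ha with h' | h'
    · exact fun hT => (Finset.disjoint_left.1 G.disj_IT) h' hT
    · exact fun hT => (Finset.disjoint_left.1 G.disj_JT) h' hT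
  rcases G.cover c with rfl | hI | hJ | hK | hT
  · exact haT ((G.v_out _).1 h)
  · exact hav ((G.I_out _ hI _).1 h)
  · rcases G.J_out _ hJ _ h with rfl | h'
    · exact hav rfl
    · exact haT h'
  · exact haT (G.K_out _ hK _ h)
  · exact G.T_out _ hT _ h

lemma cd_path_through_eq (G : CDGraph V) (s t : V) (hs : s ≠ G.v) (ht : t ≠ G.v)
    {l : List V} (hp : IsDirPath G.adj s t l) (hint : ListInterior l G.v) :
    l = [s, G.v, t] := by
  obtain ⟨hchain, hhead, hlast, hnodup⟩ := hp
  have hv : G.v ∈ l :=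
    ((List.dropLast_sublist _).trans (List.tail_sublist l)).mem hint
  obtain ⟨p, q, rfl⟩ := List.append_of_mem hv
  -- p nonempty
  rcases p with _ | ⟨a0, p'⟩
  · simp at hhead; exact absurd hhead.symm hs
  -- q nonempty
  rcases q with _ | ⟨b, q'⟩
  · rw [show (a0 :: p') ++ [G.v] = (a0 :: p') ++ [G.v] from rfl,
      List.getLast?_concat] at hlast
    exact absurd (Option.some_injective _ hlast).symm ht
  rw [List.Chain', List.isChain_append] at hchain
  obtain ⟨hc1, hc2, hrel⟩ := hchain
  -- successor of v
  have hvb : G.adj G.v b := (List.isChain_cons_cons.1 hc2).1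
  have hbT : b ∈ G.T := (G.v_out b).1 hvb
  -- q' = []
  rcases q' with _ | ⟨b2, q''⟩
  swap
  · have : G.adj b b2 := (List.isChain_cons_cons.1 (List.isChain_cons_cons.1 hc2).2).1
    exact absurd this (G.T_out _ hbT _)
  -- predecessor of v : last of p
  obtain ⟨p0, a, hpa⟩ : ∃ p0 a, a0 :: p' = p0 ++ [a] := by
    rcases List.eq_nil_or_concat (a0 :: p') with h | ⟨p0, a, h⟩
    · simp at h
    · exact ⟨p0, a, by simpa [List.concat_eq_append] using h⟩
  rw [hpa] at hrel hc1 hhead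
  have hav : G.adj a G.v := by
    exact hrel a (by rw [List.getLast?_concat]; rfl) G.v rfl
  have haIJ := G.adj_to_v hav
  -- p0 = []
  rcases List.eq_nil_or_concat p0 with rfl | ⟨p1, c, rfl⟩
  · have hsa : a = s := by simpa using hhead
    have hbt : b = t := by
      rw [hpa] at hlast; simp at hlast; exact hlast
    rw [hpa, hsa, hbt]
    simp
  · rw [List.isChain_append] at hc1
    have hca : G.adj c a := hc1.2.2 c (by rw [List.concat_eq_append, List.getLast?_concat]; rfl) a rfl
    exact absurd hca (G.no_edge_to_IJ haIJ)

/-- In a CD neighborhood graph, for any two vertices `s, t` distinct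
from `v`, the number of shortest directed paths from `s` to `t` passing through `v`
as an interior vertex satisfies `σ(s,t∣v) ≤ 1`. -/
theorem cd_sigmaThrough_le_one [Fintype V] (G : CDGraph V) (s t : V)
    (hs : s ≠ G.v) (ht : t ≠ G.v) :
    numShortestThrough G.adj s t G.v ≤ 1 := by
  have hsub : {l : List V | IsShortestDirPath G.adj s t l ∧ ListInterior l G.v}
      ⊆ {([s, G.v, t] : List V)} := by
    rintro l ⟨⟨hp, -⟩, hint⟩
    exact cd_path_through_eq G s t hs ht hp hint
  calc numShortestThrough G.adj s t G.v
      ≤ ({([s, G.v, t] : List V)} : Set (List V)).ncard :=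
        Set.ncard_le_ncard hsub (Set.finite_singleton _)
    _ = 1 := Set.ncard_singleton _
end

section
/- In a CD neighborhood graph, the raw betweenness of the focal vertex equals the total count of shortest paths through it: B(v) = Σ_{s ≠ v} Σ_{t ≠ v} σ(s,t|v), i.e. each nonzero term σ(s,t|v)/σ(s,t) in the definition of B(v) has denominator σ(s,t) = 1. -/
open Finset

variable {V : Type*}

/-- Every edge target is `v` or in `T`. -/
lemma CDGraph.adj_target (G : CDGraph V) {u w : V} (h : G.adj u w) : w = G.v ∨ w ∈ G.T := by
  rcases G.cover u with rfl | hI | hJ | hK | hT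
  · exact Or.inr ((G.v_out w).1 h)
  · exact Or.inl ((G.I_out u hI w).1 h)
  · exact G.J_out u hJ w h
  · exact Or.inr (G.K_out u hK w h)
  · exact absurd h (G.T_out u hT w)

/-- Every edge into `v` comes from `I ∪ J`. -/
lemma CDGraph.into_v (G : CDGraph V) {u : V} (h : G.adj u G.v) : u ∈ G.I ∨ u ∈ G.J := by
  rcases G.cover u with rfl | hI | hJ | hK | hT
  · exact absurd ((G.v_out G.v).1 h) G.v_not_T
  · exact Or.inl hI
  · exact Or.inr hJ
  · exact absurd (G.K_out u hK _ h) G.v_not_T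
  · exact absurd h (G.T_out u hT _)

/-- Every chain in a CD graph has length at most 3. -/
lemma CDGraph.chain_length_le (G : CDGraph V) {l : List V} (h : l.Chain' G.adj) :
    l.length ≤ 3 := by
  by_contra hlen
  push_neg at hlen
  match l, hlen with
  | a :: b :: c :: d :: rest, _ =>
    rw [List.Chain', List.isChain_cons_cons, List.isChain_cons_cons, List.isChain_cons_cons] at h
    obtain ⟨hab, hbc, hcd, -⟩ := h
    have hc : c = G.v ∨ c ∈ G.T := G.adj_target hbc
    rcases hc with rfl | hcT
    · rcases G.adj_target hab with rfl | hbT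
      · exact G.v_not_T ((G.v_out _).1 hbc)
      · exact G.T_out b hbT _ hbc
    · exact G.T_out c hcT d hcd

/-- A directed path with `v` in its interior must be `[s, v, t]`. -/
lemma CDGraph.path_through_v (G : CDGraph V) {s t : V} {l : List V}
    (hl : IsDirPath G.adj s t l) (hv : ListInterior l G.v) : l = [s, G.v, t] := by
  obtain ⟨hc, hs, ht, -⟩ := hl
  have hlen3 : l.length ≤ 3 := G.chain_length_le hc
  have hne : l.tail.dropLast ≠ [] := by
    intro h; rw [ListInterior, h] at hv; simp at hv
  have hlen : 3 ≤ l.length := by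
    have h1 : 1 ≤ l.tail.dropLast.length := List.length_pos_iff.2 hne
    simp only [List.length_dropLast, List.length_tail] at h1
    omega
  obtain ⟨a, b, c, rfl⟩ := List.length_eq_three.1 (le_antisymm hlen3 hlen)
  simp only [List.head?_cons, Option.some.injEq] at hs
  have ht' : c = t := by simpa [List.getLast?] using ht
  have hb : b = G.v := by
    rw [ListInterior] at hv
    simp at hv
    exact hv.symm
  rw [hs, ht', hb]

/-- In a CD neighborhood graph, the raw betweenness of the focal vertex
equals the total count of shortest paths through it:
`B(v) = Σ_{s ≠ v} Σ_{t ≠ v} σ(s,t∣v)`. -/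
theorem cd_betweenness_eq_path_count [Fintype V] [DecidableEq V] (G : CDGraph V) :
    G.B = ∑ s ∈ univ.erase G.v, ∑ t ∈ univ.erase G.v,
      (numShortestThrough G.adj s t G.v : ℝ) := by
  unfold CDGraph.B
  refine Finset.sum_congr rfl fun s _ => Finset.sum_congr rfl fun t _ => ?_
  by_cases h : numShortestThrough G.adj s t G.v = 0
  · rw [h]; simp
  · obtain ⟨l, hl, hint⟩ := Set.nonempty_of_ncard_ne_zero h
    have hl3 : l = [s, G.v, t] := G.path_through_v hl.1 hint
    subst hl3
    have hchain := hl.1.1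
    rw [List.Chain', List.isChain_cons_cons, List.isChain_cons_cons] at hchain
    obtain ⟨hsv, hvt, -⟩ := hchain
    have huniq : {l' : List V | IsShortestDirPath G.adj s t l'} = {[s, G.v, t]} := by
      ext l'
      simp only [Set.mem_setOf_eq, Set.mem_singleton_iff]
      constructor
      · intro hl'
        have hlen : l'.length = 3 :=
          le_antisymm (hl'.2 _ hl.1) (hl.2 _ hl'.1)
        obtain ⟨a, b, c, rfl⟩ := List.length_eq_three.1 hlen
        obtain ⟨hc', hs', ht', -⟩ := hl'.1
        simp only [List.head?_cons, Option.some.injEq] at hs'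
        have ht'' : c = t := by simpa [List.getLast?] using ht'
        rw [List.Chain', List.isChain_cons_cons, List.isChain_cons_cons] at hc'
        obtain ⟨hab, hbc, -⟩ := hc'
        rw [hs'] at hab
        rw [ht''] at hbc
        have hb : b = G.v := by
          rcases G.into_v hsv with hI | hJ
          · exact (G.I_out s hI b).1 hab
          · rcases G.J_out s hJ b hab with h' | h'
            · exact h'
            · exact absurd hbc (G.T_out b h' t)
        rw [hs', ht'', hb]
      · rintro rfl; exact hl
    have hthrough : {l' : List V | IsShortestDirPath G.adj s t l' ∧ ListInterior l' G.v}
        = {[s, G.v, t]} := by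
      apply Set.eq_singleton_iff_unique_mem.2
      refine ⟨⟨hl, hint⟩, fun l' hl' => ?_⟩
      have hm : l' ∈ {l'' : List V | IsShortestDirPath G.adj s t l''} := hl'.1
      rw [huniq] at hm
      exact hm
    rw [numShortest, numShortestThrough, huniq, hthrough, Set.ncard_singleton]
    norm_num
end

section
/- In a CD neighborhood graph, for every vertex s ∈ J, the total number of shortest directed paths starting at s and passing through v as an interior vertex equals degout(v) − degout(s) + 1, where degout(s) counts the out-edge of s to v together with its out-edges into T. -/
open Finset

variable {V : Type*}

/-- Structure of directed chains starting at a vertex `s ∈ J`. -/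
lemma CDGraph.chain_shape_from_J (G : CDGraph V) {s : V} (hs : s ∈ G.J) :
    ∀ l : List V, l.Chain' G.adj → l.head? = some s →
      l = [] ∨ l = [s] ∨ (∃ w, l = [s, w] ∧ G.adj s w) ∨
      (∃ t ∈ G.T, l = [s, G.v, t]) := by
  rintro (_ | ⟨a, _ | ⟨b, rest⟩⟩) hc hh
  · exact Or.inl rfl
  · simp only [List.head?_cons, Option.some.injEq] at hh
    subst hh; exact Or.inr (Or.inl rfl)
  · simp only [List.head?_cons, Option.some.injEq] at hh
    subst hh
    rw [List.Chain', List.isChain_cons_cons] at hc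
    obtain ⟨hsb, hc⟩ := hc
    rcases G.J_out _ hs b hsb with hb | hb
    · subst hb
      match rest, hc with
      | [], _ => exact Or.inr (Or.inr (Or.inl ⟨G.v, rfl, hsb⟩))
      | c :: rest', hc =>
        rw [List.isChain_cons_cons] at hc
        obtain ⟨hvc, hc⟩ := hc
        have hcT : c ∈ G.T := (G.v_out c).mp hvc
        match rest', hc with
        | [], _ => exact Or.inr (Or.inr (Or.inr ⟨c, hcT, rfl⟩))
        | d :: _, hc =>
          rw [List.isChain_cons_cons] at hc
          exact absurd hc.1 (G.T_out c hcT d)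
    · match rest, hc with
      | [], _ => exact Or.inr (Or.inr (Or.inl ⟨b, rfl, hsb⟩))
      | c :: _, hc =>
        rw [List.isChain_cons_cons] at hc
        exact absurd hc.1 (G.T_out b hb c)

/-- Any directed path from `s ∈ J` to `t` through `v` as interior vertex is `[s, v, t]`,
and then `t ∈ T`. -/
lemma CDGraph.dirPath_through_v (G : CDGraph V) {s t : V} (hs : s ∈ G.J)
    {l : List V} (hp : IsDirPath G.adj s t l) (hint : ListInterior l G.v) :
    l = [s, G.v, t] ∧ t ∈ G.T := by
  obtain ⟨hc, hh, hl, _⟩ := hp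
  rcases G.chain_shape_from_J hs l hc hh with rfl | rfl | ⟨w, rfl, _⟩ | ⟨t', ht', rfl⟩
  · simp at hh
  · simp [ListInterior] at hint
  · simp [ListInterior] at hint
  · simp only [List.getLast?, List.getLast, Option.some.injEq] at hl
    subst hl
    exact ⟨rfl, ht'⟩

/-- In a CD neighborhood graph, for every vertex `s ∈ J`, the total
number of shortest directed paths starting at `s` and passing through `v` as an
interior vertex equals `degout(v) − degout(s) + 1`. -/
theorem cd_paths_through_v_from_J [Fintype V] [DecidableEq V] (G : CDGraph V)
    (s : V) (hs : s ∈ G.J) :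
    ((∑ t ∈ univ.erase G.v, numShortestThrough G.adj s t G.v : ℕ) : ℤ)
      = (G.degout G.v : ℤ) - (G.degout s : ℤ) + 1 := by
  classical
  have hsv : s ≠ G.v := fun h => G.v_not_J (h ▸ hs)
  have hsT : s ∉ G.T := fun h => (G.disj_JT.forall_ne_finset hs h) rfl
  -- value of each summand
  have key : ∀ t ∈ univ.erase G.v,
      numShortestThrough G.adj s t G.v = if t ∈ G.T ∧ ¬ G.adj s t then 1 else 0 := by
    intro t ht
    have htv : t ≠ G.v := (mem_erase.mp ht).1
    by_cases h : t ∈ G.T ∧ ¬ G.adj s t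
    · rw [if_pos h]
      obtain ⟨htT, hnadj⟩ := h
      have hst : s ≠ t := fun e => hsT (e ▸ htT)
      have hvt : G.v ≠ t := fun e => G.v_not_T (e ▸ htT)
      have hset : {l : List V | IsShortestDirPath G.adj s t l ∧ ListInterior l G.v}
          = {[s, G.v, t]} := by
        ext l
        simp only [Set.mem_setOf_eq, Set.mem_singleton_iff]
        constructor
        · rintro ⟨⟨hp, _⟩, hint⟩
          exact (G.dirPath_through_v hs hp hint).1
        · rintro rfl
          have hpath : IsDirPath G.adj s t [s, G.v, t] := by
            refine ⟨?_, rfl, rfl, ?_⟩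
            · exact List.isChain_cons_cons.mpr ⟨G.J_cites_v s hs,
                List.isChain_cons_cons.mpr ⟨(G.v_out t).mpr htT, List.isChain_singleton t⟩⟩
            · simp [hsv, hst, hvt]
          refine ⟨⟨hpath, ?_⟩, ?_⟩
          · intro l' hl'
            obtain ⟨hc, hh, hl, _⟩ := hl'
            rcases G.chain_shape_from_J hs l' hc hh with rfl | rfl | ⟨w, rfl, hw⟩ |
              ⟨t', _, rfl⟩
            · simp at hh
            · simp only [List.getLast?, List.getLast, Option.some.injEq] at hl
              exact absurd hl hst
            · simp only [List.getLast?, List.getLast, Option.some.injEq] at hl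
              subst hl
              exact absurd hw hnadj
            · simp
          · simp [ListInterior]
      rw [numShortestThrough, hset, Set.ncard_singleton]
    · rw [if_neg h]
      have hset : {l : List V | IsShortestDirPath G.adj s t l ∧ ListInterior l G.v}
          = ∅ := by
        ext l
        simp only [Set.mem_setOf_eq, Set.mem_empty_iff_false, iff_false, not_and]
        rintro ⟨hp, hmin⟩ hint
        obtain ⟨rfl, htT⟩ := G.dirPath_through_v hs hp hint
        have hadj : G.adj s t := not_not.mp (not_and.mp h htT)
        have hst : s ≠ t := fun e => hsT (e ▸ htT)
        have hshort : IsDirPath G.adj s t [s, t] := by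
          refine ⟨List.isChain_cons_cons.mpr ⟨hadj, List.isChain_singleton t⟩, rfl, rfl, ?_⟩
          simp [hst]
        have := hmin [s, t] hshort
        simp at this
      rw [numShortestThrough, hset, Set.ncard_empty]
  rw [Finset.sum_congr rfl key]
  -- turn the sum into a filter cardinality
  rw [← Finset.card_filter]
  have hfe : (univ.erase G.v).filter (fun t => t ∈ G.T ∧ ¬ G.adj s t)
      = G.T.filter (fun t => ¬ G.adj s t) := by
    ext t
    simp only [mem_filter, mem_erase, mem_univ, true_and]
    constructor
    · tauto
    · rintro ⟨htT, hn⟩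
      have htv : t ≠ G.v := fun e => G.v_not_T (e ▸ htT)
      tauto
  rw [hfe]
  -- compute the out-degrees
  have hdv : G.degout G.v = G.T.card := by
    rw [CDGraph.degout]
    have : {w | G.adj G.v w} = ↑G.T := by
      ext w; simp [G.v_out w]
    rw [this, Set.ncard_coe_finset]
  have hds : G.degout s = 1 + (G.T.filter (fun t => G.adj s t)).card := by
    rw [CDGraph.degout]
    have : {w | G.adj s w} = ↑(insert G.v (G.T.filter (fun t => G.adj s t))) := by
      ext w
      simp only [Set.mem_setOf_eq, coe_insert, Set.mem_insert_iff, coe_filter,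
        Set.mem_setOf_eq, mem_coe, mem_filter]
      constructor
      · intro hw
        rcases G.J_out s hs w hw with rfl | hwT
        · exact Or.inl rfl
        · exact Or.inr ⟨hwT, hw⟩
      · rintro (rfl | ⟨_, hw⟩)
        · exact G.J_cites_v s hs
        · exact hw
    rw [this, Set.ncard_coe_finset, Finset.card_insert_of_notMem, add_comm]
    intro hmem
    exact G.v_not_T (Finset.mem_filter.mp hmem).1
  have hsplit : (G.T.filter (fun t => G.adj s t)).card
      + (G.T.filter (fun t => ¬ G.adj s t)).card = G.T.card :=
    Finset.card_filter_add_card_filter_not (p := fun t => G.adj s t)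
  rw [hdv, hds]
  omega
end

section
/- In a CD neighborhood graph, the raw betweenness of the focal vertex satisfies the exact counting identity B(v) = degout(v)·n_I + Σ_{j ∈ J} (degout(v) − degout(j) + 1), where n_I = |I|. -/
open Finset

variable {V : Type*}

namespace CDGraph

variable (G : CDGraph V)

lemma adj_target_s7 {a b : V} (h : G.adj a b) : b = G.v ∨ b ∈ G.T := by
  rcases G.cover a with rfl | ha | ha | ha | ha
  · exact Or.inr ((G.v_out b).mp h)
  · exact Or.inl ((G.I_out a ha b).mp h)
  · exact G.J_out a ha b h
  · exact Or.inr (G.K_out a ha b h)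
  · exact absurd h (G.T_out a ha b)

lemma path_shape {s t : V} {l : List V} (h : IsDirPath G.adj s t l) :
    (l = [s] ∧ t = s) ∨ (l = [s, t] ∧ G.adj s t) ∨
    (∃ x, l = [s, x, t] ∧ G.adj s x ∧ G.adj x t) := by
  obtain ⟨hc, hh, hl, hnd⟩ := h
  rcases l with _ | ⟨a, _ | ⟨b, _ | ⟨c, _ | ⟨d, r⟩⟩⟩⟩
  · simp at hh
  · simp at hh hl; exact Or.inl ⟨by rw [hh], hl.symm.trans hh⟩
  · simp [List.Chain', List.isChain_singleton] at hc hh hl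
    subst hh; subst hl; exact Or.inr (Or.inl ⟨rfl, hc⟩)
  · simp [List.Chain', List.isChain_singleton] at hc hh hl
    subst hh; subst hl
    exact Or.inr (Or.inr ⟨b, rfl, hc.1, hc.2⟩)
  · exfalso
    simp [List.Chain', List.isChain_singleton] at hc
    rcases G.adj_target_s7 hc.1 with rfl | hbT
    · have hcT := (G.v_out c).mp hc.2.1
      exact G.T_out c hcT d hc.2.2.1
    · exact G.T_out b hbT c hc.2.1
lemma self_shortest (s : V) :
    {l : List V | IsShortestDirPath G.adj s s l} = {[s]} := by
  have hone : IsDirPath G.adj s s [s] := ⟨by simp [List.Chain', List.isChain_singleton], by simp, by simp, by simp⟩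
  ext l
  simp only [Set.mem_setOf_eq, Set.mem_singleton_iff]
  constructor
  · rintro ⟨hp, hmin⟩
    rcases G.path_shape hp with ⟨h, _⟩ | ⟨h, _⟩ | ⟨x, h, _, _⟩
    · exact h
    · have := hmin [s] hone; simp [h] at this
    · have := hmin [s] hone; simp [h] at this
  · rintro rfl
    refine ⟨hone, ?_⟩
    intro l' hl'
    have hne : l' ≠ [] := by rintro rfl; simp [IsDirPath] at hl'
    have := List.length_pos_iff.mpr hne
    simpa [Nat.one_le_iff_ne_zero, Nat.pos_iff_ne_zero] using this

lemma two_shortest {s t : V} (hst : s ≠ t) (hadj : G.adj s t) :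
    {l : List V | IsShortestDirPath G.adj s t l} = {[s, t]} := by
  have htwo : IsDirPath G.adj s t [s, t] := ⟨by simp [List.Chain', List.isChain_singleton, hadj], by simp, by simp, by simp [hst]⟩
  ext l
  simp only [Set.mem_setOf_eq, Set.mem_singleton_iff]
  constructor
  · rintro ⟨hp, hmin⟩
    rcases G.path_shape hp with ⟨h, h'⟩ | ⟨h, _⟩ | ⟨x, h, _, _⟩
    · exact absurd h'.symm hst
    · exact h
    · have := hmin [s, t] htwo; simp [h] at this
  · rintro rfl
    refine ⟨htwo, ?_⟩
    intro l' hl'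
    rcases G.path_shape hl' with ⟨h, h'⟩ | ⟨h, _⟩ | ⟨x, h, _, _⟩
    · exact absurd h'.symm hst
    · simp [h]
    · simp [h]

lemma three_shortest {s t : V} (hsv : s ≠ G.v) (hst : s ≠ t) (hT : t ∈ G.T)
    (hadjv : G.adj s G.v) (hnadj : ¬ G.adj s t)
    (hmid : ∀ x, G.adj s x → G.adj x t → x = G.v) :
    {l : List V | IsShortestDirPath G.adj s t l} = {[s, G.v, t]} := by
  have htv : G.v ≠ t := fun h => G.v_not_T (h ▸ hT)
  have hthree : IsDirPath G.adj s t [s, G.v, t] :=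
    ⟨by simp [List.Chain', List.isChain_singleton, hadjv, (G.v_out t).mpr hT], by simp, by simp,
      by simp [hsv, hst, htv]⟩
  ext l
  simp only [Set.mem_setOf_eq, Set.mem_singleton_iff]
  constructor
  · rintro ⟨hp, hmin⟩
    rcases G.path_shape hp with ⟨h, h'⟩ | ⟨h, ha⟩ | ⟨x, h, ha, hb⟩
    · exact absurd h'.symm hst
    · exact absurd ha hnadj
    · rw [h, hmid x ha hb]
  · rintro rfl
    refine ⟨hthree, ?_⟩
    intro l' hl'
    rcases G.path_shape hl' with ⟨h, h'⟩ | ⟨h, ha⟩ | ⟨x, h, _, _⟩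
    · exact absurd h'.symm hst
    · exact absurd ha hnadj
    · simp [h]

lemma no_path_shortest {s t : V} (h : ∀ l, ¬ IsDirPath G.adj s t l) :
    {l : List V | IsShortestDirPath G.adj s t l} = ∅ := by
  ext l; simp only [Set.mem_setOf_eq, Set.mem_empty_iff_false, iff_false]
  rintro ⟨hp, _⟩; exact h l hp
lemma num_self (s : V) : numShortest G.adj s s = 1 := by
  rw [numShortest, G.self_shortest s]; exact Set.ncard_singleton _

lemma through_self (s : V) : numShortestThrough G.adj s s G.v = 0 := by
  have he : {l : List V | IsShortestDirPath G.adj s s l ∧ ListInterior l G.v} = ∅ := by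
    ext l
    simp only [Set.mem_setOf_eq, Set.mem_empty_iff_false, iff_false, not_and]
    intro hs hi
    have hm : l ∈ {l : List V | IsShortestDirPath G.adj s s l} := hs
    rw [G.self_shortest s] at hm
    rw [hm] at hi
    simp [ListInterior] at hi
  rw [numShortestThrough, he, Set.ncard_empty]

lemma num_two {s t : V} (hst : s ≠ t) (hadj : G.adj s t) : numShortest G.adj s t = 1 := by
  rw [numShortest, G.two_shortest hst hadj]; exact Set.ncard_singleton _

lemma through_two {s t : V} (hst : s ≠ t) (hadj : G.adj s t) :
    numShortestThrough G.adj s t G.v = 0 := by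
  have he : {l : List V | IsShortestDirPath G.adj s t l ∧ ListInterior l G.v} = ∅ := by
    ext l
    simp only [Set.mem_setOf_eq, Set.mem_empty_iff_false, iff_false, not_and]
    intro hs hi
    have hm : l ∈ {l : List V | IsShortestDirPath G.adj s t l} := hs
    rw [G.two_shortest hst hadj] at hm
    rw [hm] at hi
    simp [ListInterior] at hi
  rw [numShortestThrough, he, Set.ncard_empty]

lemma num_three {s t : V} (hsv : s ≠ G.v) (hst : s ≠ t) (hT : t ∈ G.T)
    (hadjv : G.adj s G.v) (hnadj : ¬ G.adj s t)
    (hmid : ∀ x, G.adj s x → G.adj x t → x = G.v) : numShortest G.adj s t = 1 := by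
  rw [numShortest, G.three_shortest hsv hst hT hadjv hnadj hmid]
  exact Set.ncard_singleton _

lemma through_three {s t : V} (hsv : s ≠ G.v) (hst : s ≠ t) (hT : t ∈ G.T)
    (hadjv : G.adj s G.v) (hnadj : ¬ G.adj s t)
    (hmid : ∀ x, G.adj s x → G.adj x t → x = G.v) :
    numShortestThrough G.adj s t G.v = 1 := by
  have he : {l : List V | IsShortestDirPath G.adj s t l ∧ ListInterior l G.v}
      = {[s, G.v, t]} := by
    ext l
    simp only [Set.mem_setOf_eq, Set.mem_singleton_iff]
    constructor
    · rintro ⟨hs, _⟩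
      have hm : l ∈ {l : List V | IsShortestDirPath G.adj s t l} := hs
      rwa [G.three_shortest hsv hst hT hadjv hnadj hmid] at hm
    · rintro rfl
      constructor
      · have : [s, G.v, t] ∈ {l : List V | IsShortestDirPath G.adj s t l} := by
          rw [G.three_shortest hsv hst hT hadjv hnadj hmid]; rfl
        exact this
      · simp [ListInterior]
  rw [numShortestThrough, he, Set.ncard_singleton]

lemma num_no_path {s t : V} (h : ∀ l, ¬ IsDirPath G.adj s t l) :
    numShortest G.adj s t = 0 ∧ numShortestThrough G.adj s t G.v = 0 := by
  have h1 : {l : List V | IsShortestDirPath G.adj s t l} = ∅ := G.no_path_shortest h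
  constructor
  · rw [numShortest, h1, Set.ncard_empty]
  · have h2 : {l : List V | IsShortestDirPath G.adj s t l ∧ ListInterior l G.v} = ∅ := by
      ext l
      simp only [Set.mem_setOf_eq, Set.mem_empty_iff_false, iff_false, not_and]
      rintro ⟨hp, _⟩ _
      exact h l hp
    rw [numShortestThrough, h2, Set.ncard_empty]

lemma no_path_target {s t : V} (hst : s ≠ t) (htv : t ≠ G.v) (htT : t ∉ G.T) :
    ∀ l, ¬ IsDirPath G.adj s t l := by
  intro l hp
  rcases G.path_shape hp with ⟨_, h'⟩ | ⟨_, ha⟩ | ⟨x, _, _, hb⟩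
  · exact hst h'.symm
  · rcases G.adj_target_s7 ha with h | h
    · exact htv h
    · exact htT h
  · rcases G.adj_target_s7 hb with h | h
    · exact htv h
    · exact htT h

lemma no_path_sT {s t : V} (hsT : s ∈ G.T) (hst : s ≠ t) :
    ∀ l, ¬ IsDirPath G.adj s t l := by
  intro l hp
  rcases G.path_shape hp with ⟨_, h'⟩ | ⟨_, ha⟩ | ⟨x, _, ha, _⟩
  · exact hst h'.symm
  · exact G.T_out s hsT t ha
  · exact G.T_out s hsT x ha

lemma no_path_K {s t : V} (hK : s ∈ G.K) (hst : s ≠ t) (hnadj : ¬ G.adj s t) :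
    ∀ l, ¬ IsDirPath G.adj s t l := by
  intro l hp
  rcases G.path_shape hp with ⟨_, h'⟩ | ⟨_, ha⟩ | ⟨x, _, ha, hb⟩
  · exact hst h'.symm
  · exact hnadj ha
  · exact G.T_out x (G.K_out s hK x ha) t hb

lemma degout_v_eq : G.degout G.v = G.T.card := by
  have : {w | G.adj G.v w} = ↑G.T := by ext w; simp [G.v_out]
  rw [CDGraph.degout, this, Set.ncard_coe_finset]

lemma degout_J_eq [DecidableEq V] {j : V} (hj : j ∈ G.J) [DecidablePred (G.adj j)] :
    G.degout j = (G.T.filter (fun t => G.adj j t)).card + 1 := by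
  have hset : {w | G.adj j w} = insert G.v ↑(G.T.filter (fun t => G.adj j t)) := by
    ext w
    simp only [Set.mem_setOf_eq, Set.mem_insert_iff, Finset.coe_filter, Set.mem_setOf_eq]
    constructor
    · intro h
      rcases G.J_out j hj w h with rfl | hT
      · exact Or.inl rfl
      · exact Or.inr ⟨hT, h⟩
    · rintro (rfl | ⟨_, h⟩)
      · exact G.J_cites_v j hj
      · exact h
  have hvn : G.v ∉ (↑(G.T.filter (fun t => G.adj j t)) : Set V) := by
    simp only [Finset.coe_filter, Set.mem_setOf_eq]
    rintro ⟨h, _⟩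
    exact G.v_not_T h
  rw [CDGraph.degout, hset, Set.ncard_insert_of_notMem hvn (Set.toFinite _),
    Set.ncard_coe_finset]
lemma term_zero {s t : V} (hs : s ≠ G.v) (ht : t ≠ G.v)
    (hc : ¬ ((s ∈ G.I ∨ (s ∈ G.J ∧ ¬ G.adj s t)) ∧ t ∈ G.T)) :
    (numShortestThrough G.adj s t G.v : ℝ) / (numShortest G.adj s t : ℝ) = 0 := by
  by_cases hst : s = t
  · subst hst; rw [G.num_self, G.through_self]; simp
  · by_cases htT : t ∈ G.T
    · rcases G.cover s with rfl | hI | hJ | hK | hT4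
      · exact absurd rfl hs
      · exact absurd ⟨Or.inl hI, htT⟩ hc
      · by_cases hadj : G.adj s t
        · rw [G.num_two hst hadj, G.through_two hst hadj]; simp
        · exact absurd ⟨Or.inr ⟨hJ, hadj⟩, htT⟩ hc
      · by_cases hadj : G.adj s t
        · rw [G.num_two hst hadj, G.through_two hst hadj]; simp
        · obtain ⟨h1, h2⟩ := G.num_no_path (G.no_path_K hK hst hadj)
          rw [h1, h2]; simp
      · obtain ⟨h1, h2⟩ := G.num_no_path (G.no_path_sT hT4 hst)
        rw [h1, h2]; simp
    · obtain ⟨h1, h2⟩ := G.num_no_path (G.no_path_target hst ht htT)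
      rw [h1, h2]; simp

lemma term_one {s t : V} (hs : s ≠ G.v) (ht : t ≠ G.v)
    (hc : (s ∈ G.I ∨ (s ∈ G.J ∧ ¬ G.adj s t)) ∧ t ∈ G.T) :
    (numShortestThrough G.adj s t G.v : ℝ) / (numShortest G.adj s t : ℝ) = 1 := by
  obtain ⟨hc1, htT⟩ := hc
  rcases hc1 with hI | ⟨hJ, hnadj⟩
  · have hst : s ≠ t := fun h => Finset.disjoint_left.mp G.disj_IT hI (h ▸ htT)
    have hnadj : ¬ G.adj s t := fun h => ht ((G.I_out s hI t).mp h)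
    have hmid : ∀ x, G.adj s x → G.adj x t → x = G.v :=
      fun x hx _ => (G.I_out s hI x).mp hx
    rw [G.num_three hs hst htT ((G.I_out s hI G.v).mpr rfl) hnadj hmid,
      G.through_three hs hst htT ((G.I_out s hI G.v).mpr rfl) hnadj hmid]
    norm_num
  · have hst : s ≠ t := fun h => Finset.disjoint_left.mp G.disj_JT hJ (h ▸ htT)
    have hmid : ∀ x, G.adj s x → G.adj x t → x = G.v := by
      intro x hx hxt
      rcases G.J_out s hJ x hx with rfl | hxT
      · rfl
      · exact absurd hxt (G.T_out x hxT t)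
    rw [G.num_three hs hst htT (G.J_cites_v s hJ) hnadj hmid,
      G.through_three hs hst htT (G.J_cites_v s hJ) hnadj hmid]
    norm_num

end CDGraph
/-- In a CD neighborhood graph, the raw betweenness of the focal vertex
satisfies the exact counting identity
`B(v) = degout(v)·n_I + Σ_{j ∈ J} (degout(v) − degout(j) + 1)`, where `n_I = |I|`. -/
theorem cd_betweenness_counting_identity [Fintype V] [DecidableEq V] (G : CDGraph V) :
    G.B = (G.degout G.v : ℝ) * (G.I.card : ℝ)
        + ∑ j ∈ G.J, ((G.degout G.v : ℝ) - (G.degout j : ℝ) + 1) := by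
  classical
  have hTv : ∀ t ∈ G.T, t ≠ G.v := fun t ht h => G.v_not_T (h ▸ ht)
  have key : ∀ s, s ≠ G.v → ∀ t, t ≠ G.v →
      (numShortestThrough G.adj s t G.v : ℝ) / (numShortest G.adj s t : ℝ)
      = if (s ∈ G.I ∨ (s ∈ G.J ∧ ¬ G.adj s t)) ∧ t ∈ G.T then (1 : ℝ) else 0 := by
    intro s hs t ht
    by_cases hc : (s ∈ G.I ∨ (s ∈ G.J ∧ ¬ G.adj s t)) ∧ t ∈ G.T
    · rw [if_pos hc]; exact G.term_one hs ht hc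
    · rw [if_neg hc]; exact G.term_zero hs ht hc
  have step1 : ∀ s ∈ univ.erase G.v,
      ∑ t ∈ univ.erase G.v,
        (numShortestThrough G.adj s t G.v : ℝ) / (numShortest G.adj s t : ℝ)
      = ∑ t ∈ G.T, (if s ∈ G.I ∨ (s ∈ G.J ∧ ¬ G.adj s t) then (1 : ℝ) else 0) := by
    intro s hsmem
    have hs : s ≠ G.v := (Finset.mem_erase.mp hsmem).1
    rw [Finset.sum_congr rfl (fun t htmem => key s hs t (Finset.mem_erase.mp htmem).1)]
    have h2 : (∑ t ∈ G.T, if (s ∈ G.I ∨ s ∈ G.J ∧ ¬G.adj s t) ∧ t ∈ G.T then (1:ℝ) else 0)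
        = ∑ t ∈ univ.erase G.v,
            if (s ∈ G.I ∨ s ∈ G.J ∧ ¬G.adj s t) ∧ t ∈ G.T then (1:ℝ) else 0 :=
      Finset.sum_subset
        (fun t ht => Finset.mem_erase.mpr ⟨hTv t ht, Finset.mem_univ t⟩)
        (fun t _ htT => if_neg (fun h => htT h.2))
    exact h2.symm.trans (Finset.sum_congr rfl fun t ht => by simp [ht])
  rw [CDGraph.B, Finset.sum_congr rfl step1]
  have hsub : G.I ∪ G.J ⊆ univ.erase G.v := by
    intro s hsmem
    rcases Finset.mem_union.mp hsmem with h | h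
    · exact Finset.mem_erase.mpr ⟨fun he => G.v_not_I (he ▸ h), Finset.mem_univ s⟩
    · exact Finset.mem_erase.mpr ⟨fun he => G.v_not_J (he ▸ h), Finset.mem_univ s⟩
  have h3 : (∑ s ∈ G.I ∪ G.J, ∑ t ∈ G.T,
        (if s ∈ G.I ∨ (s ∈ G.J ∧ ¬ G.adj s t) then (1 : ℝ) else 0))
      = ∑ s ∈ univ.erase G.v, ∑ t ∈ G.T,
        (if s ∈ G.I ∨ (s ∈ G.J ∧ ¬ G.adj s t) then (1 : ℝ) else 0) :=
    Finset.sum_subset hsub (fun s _ hsn => Finset.sum_eq_zero fun t _ => if_neg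
      (by
        rintro (h | ⟨h, _⟩)
        · exact hsn (Finset.mem_union_left _ h)
        · exact hsn (Finset.mem_union_right _ h)))
  rw [← h3, Finset.sum_union G.disj_IJ]
  congr 1
  · -- I part
    rw [Finset.sum_congr rfl (fun s hsI => Finset.sum_congr rfl
      (fun t _ => if_pos (Or.inl hsI)))]
    rw [G.degout_v_eq]
    simp [mul_comm]
  · -- J part
    apply Finset.sum_congr rfl
    intro j hj
    have hjI : j ∉ G.I := fun h => Finset.disjoint_left.mp G.disj_IJ h hj
    have hrw : ∀ t ∈ G.T,
        (if j ∈ G.I ∨ (j ∈ G.J ∧ ¬ G.adj j t) then (1 : ℝ) else 0)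
        = if ¬ G.adj j t then (1 : ℝ) else 0 := by
      intro t _
      by_cases h : G.adj j t
      · rw [if_neg (by rintro (h' | ⟨_, h'⟩); exacts [hjI h', h' h]), if_neg (by simp [h])]
      · rw [if_pos (Or.inr ⟨hj, h⟩), if_pos h]
    rw [Finset.sum_congr rfl hrw, Finset.sum_boole]
    have hcards := Finset.card_filter_add_card_filter_not
      (s := G.T) (p := fun t => G.adj j t)
    rw [G.degout_J_eq hj, G.degout_v_eq]
    have h1 : ((G.T.filter (fun t => ¬ G.adj j t)).card : ℝ)
        + ((G.T.filter (fun t => G.adj j t)).card : ℝ) = (G.T.card : ℝ) := by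
      exact_mod_cast by omega
    push_cast
    linarith
end

section
/- In a CD neighborhood graph with K = ∅, degout(v) ≥ 1 and degin(v) ≥ 1, the no-k normalized betweenness B^nk(v) = B(v)/(degout(v)·degin(v)) satisfies B^nk(v) = 1 − (Σ_{j ∈ J} (degout(j) − 1)) / (degout(v)·degin(v)). -/
open Finset

variable {V : Type*}

section Aux

variable {V : Type*}

lemma isDirPath_pair {adj : V → V → Prop} {s t : V} (h : adj s t) (hne : s ≠ t) :
    IsDirPath adj s t [s, t] := by
  refine ⟨?_, rfl, rfl, ?_⟩ <;> simp [List.Chain', h, hne]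

lemma isDirPath_triple {adj : V → V → Prop} {s v t : V} (h1 : adj s v) (h2 : adj v t)
    (h12 : s ≠ v) (h23 : v ≠ t) (h13 : s ≠ t) : IsDirPath adj s t [s, v, t] := by
  refine ⟨?_, rfl, rfl, ?_⟩ <;> simp [List.Chain', h1, h2, h12, h23, h13]

/-- classification of directed paths from `I ∪ J` into `T`. -/
lemma CDGraph.path_cases (G : CDGraph V) {s t : V} {l : List V}
    (hs : s ∈ G.I ∨ s ∈ G.J) (ht : t ∈ G.T) (h : IsDirPath G.adj s t l) :
    (l = [s, t] ∧ G.adj s t) ∨ l = [s, G.v, t] := by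
  obtain ⟨hc, hh, hl, hn⟩ := h
  match l with
  | [] => simp at hh
  | [a] =>
    simp only [List.head?_cons, Option.some_inj] at hh
    simp only [List.getLast?_singleton, Option.some_inj] at hl
    subst hh; subst hl
    rcases hs with hs | hs
    · exact absurd ht (Finset.disjoint_left.mp G.disj_IT hs)
    · exact absurd ht (Finset.disjoint_left.mp G.disj_JT hs)
  | a :: b :: r =>
    simp only [List.head?_cons, Option.some_inj] at hh
    subst hh
    have hab : G.adj a b := (List.isChain_cons_cons.mp hc).1
    have hc' : (b :: r).Chain' G.adj := (List.isChain_cons_cons.mp hc).2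
    have hbcase : b = G.v ∨ b ∈ G.T := by
      rcases hs with hs | hs
      · exact Or.inl ((G.I_out a hs b).mp hab)
      · exact G.J_out a hs b hab
    rcases hbcase with rfl | hbT
    · -- b = v
      match r with
      | [] =>
        simp only [List.getLast?_cons_cons, List.getLast?_singleton, Option.some_inj] at hl
        exact absurd (hl ▸ ht) G.v_not_T
      | c :: r2 =>
        have hvc : G.adj G.v c := (List.isChain_cons_cons.mp hc').1
        have hcT : c ∈ G.T := (G.v_out c).mp hvc
        match r2 with
        | [] =>
          simp only [List.getLast?_cons_cons, List.getLast?_singleton, Option.some_inj] at hl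
          subst hl; exact Or.inr rfl
        | d :: r3 =>
          exact absurd ((List.isChain_cons_cons.mp (List.isChain_cons_cons.mp hc').2).1)
            (G.T_out c hcT d)
    · -- b ∈ T
      match r with
      | [] =>
        simp only [List.getLast?_cons_cons, List.getLast?_singleton, Option.some_inj] at hl
        subst hl; exact Or.inl ⟨rfl, hab⟩
      | c :: r2 =>
        exact absurd (List.isChain_cons_cons.mp hc').1 (G.T_out b hbT c)

end Aux
section Aux2

variable {V : Type*}

lemma shortest_unique {adj : V → V → Prop} {s t : V} {l0 : List V}
    (hp : IsDirPath adj s t l0) (huniq : ∀ l, IsDirPath adj s t l → l = l0) :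
    {l : List V | IsShortestDirPath adj s t l} = {l0} := by
  ext l
  simp only [Set.mem_setOf_eq, Set.mem_singleton_iff]
  constructor
  · intro h; exact huniq l h.1
  · rintro rfl
    exact ⟨hp, fun l' hl' => by rw [huniq l' hl']⟩

lemma CDGraph.shortest_I (G : CDGraph V) {s t : V} (hs : s ∈ G.I) (ht : t ∈ G.T) :
    {l : List V | IsShortestDirPath G.adj s t l} = {[s, G.v, t]} := by
  have hsv : G.adj s G.v := (G.I_out s hs G.v).mpr rfl
  have hvt : G.adj G.v t := (G.v_out t).mpr ht
  have h12 : s ≠ G.v := fun h => G.v_not_I (h ▸ hs)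
  have h23 : G.v ≠ t := fun h => G.v_not_T (h ▸ ht)
  have h13 : s ≠ t := fun h => Finset.disjoint_left.mp G.disj_IT hs (h ▸ ht)
  refine shortest_unique (isDirPath_triple hsv hvt h12 h23 h13) (fun l hl => ?_)
  rcases G.path_cases (Or.inl hs) ht hl with ⟨_, hadj⟩ | h
  · exact absurd ((G.I_out s hs t).mp hadj) (fun h => G.v_not_T (h ▸ ht))
  · exact h

lemma CDGraph.shortest_J_nadj (G : CDGraph V) {s t : V} (hs : s ∈ G.J) (ht : t ∈ G.T)
    (hna : ¬ G.adj s t) :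
    {l : List V | IsShortestDirPath G.adj s t l} = {[s, G.v, t]} := by
  have hsv : G.adj s G.v := G.J_cites_v s hs
  have hvt : G.adj G.v t := (G.v_out t).mpr ht
  have h12 : s ≠ G.v := fun h => G.v_not_J (h ▸ hs)
  have h23 : G.v ≠ t := fun h => G.v_not_T (h ▸ ht)
  have h13 : s ≠ t := fun h => Finset.disjoint_left.mp G.disj_JT hs (h ▸ ht)
  refine shortest_unique (isDirPath_triple hsv hvt h12 h23 h13) (fun l hl => ?_)
  rcases G.path_cases (Or.inr hs) ht hl with ⟨_, hadj⟩ | h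
  · exact absurd hadj hna
  · exact h

lemma CDGraph.shortest_J_adj (G : CDGraph V) {s t : V} (hs : s ∈ G.J) (ht : t ∈ G.T)
    (ha : G.adj s t) :
    {l : List V | IsShortestDirPath G.adj s t l} = {[s, t]} := by
  have h13 : s ≠ t := fun h => Finset.disjoint_left.mp G.disj_JT hs (h ▸ ht)
  have hp : IsDirPath G.adj s t [s, t] := isDirPath_pair ha h13
  ext l
  simp only [Set.mem_setOf_eq, Set.mem_singleton_iff]
  constructor
  · rintro ⟨hl, hmin⟩
    rcases G.path_cases (Or.inr hs) ht hl with ⟨h, _⟩ | h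
    · exact h
    · exfalso
      have := hmin [s, t] hp
      rw [h] at this
      simp at this
  · rintro rfl
    refine ⟨hp, fun l' hl' => ?_⟩
    rcases G.path_cases (Or.inr hs) ht hl' with ⟨h, _⟩ | h <;> simp [h]

lemma numShortest_of_eq_singleton {adj : V → V → Prop} {s t : V} {l0 : List V}
    (h : {l : List V | IsShortestDirPath adj s t l} = {l0}) :
    numShortest adj s t = 1 := by
  rw [numShortest, h]; exact Set.ncard_singleton _

lemma numShortestThrough_of_interior {adj : V → V → Prop} {s t x : V} {l0 : List V}
    (h : {l : List V | IsShortestDirPath adj s t l} = {l0}) (hi : ListInterior l0 x) :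
    numShortestThrough adj s t x = 1 := by
  rw [numShortestThrough]
  have : {l : List V | IsShortestDirPath adj s t l ∧ ListInterior l x} = {l0} := by
    ext l
    simp only [Set.mem_setOf_eq, Set.mem_singleton_iff]
    constructor
    · intro hl
      have : l ∈ {l : List V | IsShortestDirPath adj s t l} := hl.1
      rw [h] at this
      exact this
    · rintro rfl
      have : l ∈ {l : List V | IsShortestDirPath adj s t l} := by rw [h]; rfl
      exact ⟨this, hi⟩
  rw [this]; exact Set.ncard_singleton _

lemma numShortestThrough_of_not_interior {adj : V → V → Prop} {s t x : V} {l0 : List V}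
    (h : {l : List V | IsShortestDirPath adj s t l} = {l0}) (hi : ¬ ListInterior l0 x) :
    numShortestThrough adj s t x = 0 := by
  rw [numShortestThrough]
  have : {l : List V | IsShortestDirPath adj s t l ∧ ListInterior l x} = ∅ := by
    ext l
    simp only [Set.mem_setOf_eq, Set.mem_empty_iff_false, iff_false, not_and]
    intro hl
    have hl0 : l ∈ {l : List V | IsShortestDirPath adj s t l} := hl
    rw [h] at hl0
    rw [hl0]; exact hi
  rw [this]; exact Set.ncard_empty _

lemma interior_triple {s v t : V} : ListInterior [s, v, t] v := by
  simp [ListInterior]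

lemma not_interior_pair {s t v : V} : ¬ ListInterior [s, t] v := by
  simp [ListInterior]

end Aux2
section Aux3

variable {V : Type*}

lemma CDGraph.no_edge_into (G : CDGraph V) {t : V} (ht : t ∈ G.I ∨ t ∈ G.J) (u : V) :
    ¬ G.adj u t := by
  intro h
  have htv : t ≠ G.v := by
    rintro rfl
    rcases ht with ht | ht
    · exact G.v_not_I ht
    · exact G.v_not_J ht
  have htT : t ∉ G.T := by
    intro hT
    rcases ht with h' | h'
    · exact Finset.disjoint_left.mp G.disj_IT h' hT
    · exact Finset.disjoint_left.mp G.disj_JT h' hT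
  rcases G.cover u with rfl | hu | hu | hu | hu
  · exact htT ((G.v_out t).mp h)
  · exact htv ((G.I_out u hu t).mp h)
  · rcases G.J_out u hu t h with h' | h'
    · exact htv h'
    · exact htT h'
  · exact htT (G.K_out u hu t h)
  · exact G.T_out u hu t h

lemma numShortest_eq_zero_of_no_in {adj : V → V → Prop} {s t : V} (hst : s ≠ t)
    (hni : ∀ u, ¬ adj u t) : numShortest adj s t = 0 := by
  rw [numShortest]
  convert Set.ncard_empty (List V)
  ext l
  simp only [Set.mem_setOf_eq, Set.mem_empty_iff_false, iff_false]
  rintro ⟨⟨hc, hh, hl, _⟩, _⟩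
  have hcr : l.reverse.Chain' (flip adj) := List.isChain_reverse.mpr hc
  have hhr : l.reverse.head? = some t := by rw [List.head?_reverse]; exact hl
  rcases hr : l.reverse with _ | ⟨a, _ | ⟨b, r⟩⟩
  · have : l = [] := by simpa using congrArg List.reverse hr
    rw [this] at hh; simp at hh
  · have : l = [a] := by
      have := congrArg List.reverse hr
      simpa using this
    rw [this] at hh hl
    simp only [List.head?_cons, Option.some_inj] at hh
    simp only [List.getLast?_singleton, Option.some_inj] at hl
    exact hst (hh ▸ hl ▸ rfl)
  · rw [hr] at hcr hhr
    simp only [List.head?_cons, Option.some_inj] at hhr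
    subst hhr
    exact hni b (List.isChain_cons_cons.mp hcr).1

lemma CDGraph.numShortest_eq_zero_of_T (G : CDGraph V) {s t : V} (hs : s ∈ G.T)
    (hst : s ≠ t) : numShortest G.adj s t = 0 := by
  rw [numShortest]
  convert Set.ncard_empty (List V)
  ext l
  simp only [Set.mem_setOf_eq, Set.mem_empty_iff_false, iff_false]
  rintro ⟨⟨hc, hh, hl, _⟩, _⟩
  match l with
  | [] => simp at hh
  | [a] =>
    simp only [List.head?_cons, Option.some_inj] at hh
    simp only [List.getLast?_singleton, Option.some_inj] at hl
    exact hst (hh ▸ hl ▸ rfl)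
  | a :: b :: r =>
    simp only [List.head?_cons, Option.some_inj] at hh
    subst hh
    exact G.T_out a hs b (List.isChain_cons_cons.mp hc).1

lemma numShortestThrough_self {adj : V → V → Prop} {s x : V} :
    numShortestThrough adj s s x = 0 := by
  rw [numShortestThrough]
  convert Set.ncard_empty (List V)
  ext l
  simp only [Set.mem_setOf_eq, Set.mem_empty_iff_false, iff_false, not_and]
  rintro ⟨⟨hc, hh, hl, hn⟩, _⟩
  match l with
  | [] => simp at hh
  | [a] => simp [ListInterior]
  | a :: b :: r =>
    exfalso
    simp only [List.head?_cons, Option.some_inj] at hh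
    subst hh
    rw [List.getLast?_cons_cons] at hl
    have hmem : a ∈ b :: r := List.mem_of_mem_getLast? hl
    exact (List.nodup_cons.mp hn).1 hmem

end Aux3
section Aux4

variable {V : Type*}

lemma CDGraph.degout_v_eq_s9 (G : CDGraph V) : G.degout G.v = G.T.card := by
  rw [CDGraph.degout]
  have : {w | G.adj G.v w} = ↑G.T := by ext w; simp [G.v_out w]
  rw [this, Set.ncard_coe_finset]

lemma CDGraph.degout_J_eq_s9 (G : CDGraph V) [DecidableEq V] {j : V} (hj : j ∈ G.J)
    [DecidablePred (G.adj j)] :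
    G.degout j = (G.T.filter (G.adj j)).card + 1 := by
  rw [CDGraph.degout]
  have hset : {w | G.adj j w} = ↑(insert G.v (G.T.filter (G.adj j))) := by
    ext w
    simp only [Set.mem_setOf_eq, Finset.coe_insert, Set.mem_insert_iff,
      Finset.coe_filter, Set.mem_setOf_eq, Finset.mem_filter]
    constructor
    · intro h
      rcases G.J_out j hj w h with rfl | hT
      · exact Or.inl rfl
      · exact Or.inr ⟨hT, h⟩
    · rintro (rfl | ⟨_, h⟩)
      · exact G.J_cites_v j hj
      · exact h
  rw [hset, Set.ncard_coe_finset, Finset.card_insert_of_notMem, add_comm]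
  intro hmem
  exact G.v_not_T (Finset.mem_filter.mp hmem).1

end Aux4

/-- In a CD neighborhood graph with `K = ∅`, `degout(v) ≥ 1` and
`degin(v) ≥ 1`, the no-k normalized betweenness `B^nk(v) = B(v)/(degout(v)·degin(v))`
satisfies `B^nk(v) = 1 − (Σ_{j ∈ J} (degout(j) − 1)) / (degout(v)·degin(v))`. -/
theorem cd_nok_normalized_betweenness_formula [Fintype V] [DecidableEq V] (G : CDGraph V)
    (hK : G.K = ∅) (h1 : 1 ≤ G.degout G.v) (h2 : 1 ≤ G.degin) :
    G.B / ((G.degout G.v : ℝ) * (G.degin : ℝ))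
      = 1 - (∑ j ∈ G.J, ((G.degout j : ℝ) - 1))
              / ((G.degout G.v : ℝ) * (G.degin : ℝ)) := by
  classical
  set f : V → V → ℝ :=
    fun s t => (numShortestThrough G.adj s t G.v : ℝ) / (numShortest G.adj s t : ℝ) with hf
  -- terms with target in I ∪ J vanish
  have hIJt : ∀ s t : V, (t ∈ G.I ∨ t ∈ G.J) → f s t = 0 := by
    intro s t ht
    by_cases hst : s = t
    · subst hst
      simp [hf, numShortestThrough_self]
    · rw [hf]
      simp [numShortest_eq_zero_of_no_in hst (G.no_edge_into ht)]
  -- terms with source in T vanish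
  have hTs : ∀ s ∈ G.T, ∀ t : V, f s t = 0 := by
    intro s hs t
    by_cases hst : s = t
    · subst hst
      simp [hf, numShortestThrough_self]
    · rw [hf]
      simp [G.numShortest_eq_zero_of_T hs hst]
  -- source in I, target in T gives 1
  have hIs : ∀ s ∈ G.I, ∀ t ∈ G.T, f s t = 1 := by
    intro s hs t ht
    have h := G.shortest_I hs ht
    rw [hf]
    simp [numShortest_of_eq_singleton h,
      numShortestThrough_of_interior h interior_triple]
  -- source in J, target in T
  have hJs : ∀ s ∈ G.J, ∀ t ∈ G.T, f s t = if G.adj s t then 0 else 1 := by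
    intro s hs t ht
    by_cases ha : G.adj s t
    · have h := G.shortest_J_adj hs ht ha
      rw [hf, if_pos ha]
      simp [numShortestThrough_of_not_interior h not_interior_pair]
    · have h := G.shortest_J_nadj hs ht ha
      rw [hf, if_neg ha]
      simp [numShortest_of_eq_singleton h,
        numShortestThrough_of_interior h interior_triple]
  -- decomposition of the vertex set
  have huniv : Finset.univ.erase G.v = (G.I ∪ G.J) ∪ G.T := by
    ext x
    simp only [Finset.mem_erase, Finset.mem_univ, and_true, Finset.mem_union]
    constructor
    · intro hx
      rcases G.cover x with rfl | h | h | h | h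
      · exact absurd rfl hx
      · exact Or.inl (Or.inl h)
      · exact Or.inl (Or.inr h)
      · rw [hK] at h; simp at h
      · exact Or.inr h
    · rintro ((h | h) | h) <;> rintro rfl
      · exact G.v_not_I h
      · exact G.v_not_J h
      · exact G.v_not_T h
  have hdisj1 : Disjoint (G.I ∪ G.J) G.T :=
    Finset.disjoint_union_left.mpr ⟨G.disj_IT, G.disj_JT⟩
  -- the raw betweenness
  have hB : G.B = (G.I.card : ℝ) * G.T.card
      + ∑ j ∈ G.J, ((G.T.card : ℝ) - ((G.T.filter (G.adj j)).card : ℝ)) := by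
    have hBdef : G.B = ∑ s ∈ (G.I ∪ G.J) ∪ G.T, ∑ t ∈ (G.I ∪ G.J) ∪ G.T, f s t := by
      rw [CDGraph.B, huniv]
    rw [hBdef, Finset.sum_union hdisj1, Finset.sum_union G.disj_IJ]
    have eT : ∑ s ∈ G.T, ∑ t ∈ (G.I ∪ G.J) ∪ G.T, f s t = 0 :=
      Finset.sum_eq_zero fun s hs => Finset.sum_eq_zero fun t _ => hTs s hs t
    have eI : ∑ s ∈ G.I, ∑ t ∈ (G.I ∪ G.J) ∪ G.T, f s t = (G.I.card : ℝ) * G.T.card := by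
      rw [Finset.sum_congr rfl fun s hs => ?_]
      · rw [Finset.sum_const, nsmul_eq_mul]
      · rw [Finset.sum_union hdisj1]
        have z : ∑ t ∈ G.I ∪ G.J, f s t = 0 :=
          Finset.sum_eq_zero fun t ht => hIJt s t (Finset.mem_union.mp ht)
        have o : ∑ t ∈ G.T, f s t = (G.T.card : ℝ) := by
          rw [Finset.sum_congr rfl fun t ht => hIs s hs t ht]
          simp
        rw [z, o, zero_add]
    have eJ : ∑ s ∈ G.J, ∑ t ∈ (G.I ∪ G.J) ∪ G.T, f s t
        = ∑ j ∈ G.J, ((G.T.card : ℝ) - ((G.T.filter (G.adj j)).card : ℝ)) := by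
      refine Finset.sum_congr rfl fun s hs => ?_
      rw [Finset.sum_union hdisj1]
      have z : ∑ t ∈ G.I ∪ G.J, f s t = 0 :=
        Finset.sum_eq_zero fun t ht => hIJt s t (Finset.mem_union.mp ht)
      rw [z, zero_add, Finset.sum_congr rfl fun t ht => hJs s hs t ht]
      rw [Finset.sum_ite, Finset.sum_const, Finset.sum_const]
      have hcard : (G.T.filter (G.adj s)).card + (G.T.filter (fun t => ¬ G.adj s t)).card
          = G.T.card := Finset.card_filter_add_card_filter_not _
      have : ((G.T.filter (fun t => ¬ G.adj s t)).card : ℝ)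
          = (G.T.card : ℝ) - ((G.T.filter (G.adj s)).card : ℝ) := by
        rw [← hcard]; push_cast; ring
      simp [this]
    rw [eT, eI, eJ, add_zero]
  -- degrees
  have hdv : (G.degout G.v : ℝ) = (G.T.card : ℝ) := by rw [G.degout_v_eq_s9]
  have hdj : ∀ j ∈ G.J, (G.degout j : ℝ) - 1 = ((G.T.filter (G.adj j)).card : ℝ) := by
    intro j hj
    rw [G.degout_J_eq_s9 hj]
    push_cast
    ring
  have hdin : (G.degin : ℝ) = (G.I.card : ℝ) + (G.J.card : ℝ) := by
    rw [CDGraph.degin]; push_cast; ring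
  have hBeq : G.B = (G.degout G.v : ℝ) * (G.degin : ℝ)
      - ∑ j ∈ G.J, ((G.degout j : ℝ) - 1) := by
    rw [hB, hdv, hdin, Finset.sum_congr rfl hdj, Finset.sum_sub_distrib,
      Finset.sum_const, nsmul_eq_mul]
    ring
  have hne : (G.degout G.v : ℝ) * (G.degin : ℝ) ≠ 0 := by
    have p1 : (0 : ℝ) < (G.degout G.v : ℝ) := by exact_mod_cast lt_of_lt_of_le one_pos h1
    have p2 : (0 : ℝ) < (G.degin : ℝ) := by exact_mod_cast lt_of_lt_of_le one_pos h2
    positivity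
  rw [hBeq]
  field_simp
end
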